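/- arXiv:1707.06956 — 2 statements merged into one kernel-verified Lean document; each statement's English description precedes it below -/
import Mathlib

section
/- Let f be a probability density that is continuously differentiable and strictly positive on (0,∞) and such that Lin's function L_f(x) = -x f'(x)/f(x) is (strictly) monotone increasing on (0,∞). Then, for every pair of constants 0 < a < b, the function τ(x) := f(ax)/f(bx) is (strictly) monotone increasing in x on (0,∞). -/
open MeasureTheory Filter Set

/-- Lin's function of a density `f`: `L_f(x) = -x f'(x) / f(x)`. -/
noncomputable def linFun (f : ℝ → ℝ) : ℝ → ℝ := fun x => -x * deriv f x / f x

/-- If `f` is a probability density of a positive random variable, continuously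
differentiable and strictly positive on `(0,∞)`, whose Lin function is strictly monotone
increasing on `(0,∞)`, then for all `0 < a < b` the function `τ(x) = f(ax)/f(bx)` is
strictly monotone increasing on `(0,∞)`. -/
theorem ratio_strictMono_of_linFun_strictMono
    (f : ℝ → ℝ)
    (hf0 : ∀ x, 0 ≤ f x) (hvanish : ∀ x ≤ (0:ℝ), f x = 0)
    (hint : ∫ x in Ioi (0:ℝ), f x = 1)
    (hC : ContDiffOn ℝ 1 f (Ioi 0))
    (hpos : ∀ x ∈ Ioi (0:ℝ), 0 < f x)
    (hL : StrictMonoOn (linFun f) (Ioi 0))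
    (a b : ℝ) (ha : 0 < a) (hab : a < b) :
    StrictMonoOn (fun x => f (a * x) / f (b * x)) (Ioi 0) := by
  have hb : 0 < b := ha.trans hab
  have hdiff : ∀ x ∈ Ioi (0:ℝ), DifferentiableAt ℝ f x := fun x hx =>
    (hC.differentiableOn one_ne_zero).differentiableAt (isOpen_Ioi.mem_nhds hx)
  have key : ∀ x ∈ Ioi (0:ℝ), HasDerivAt (fun x => f (a * x) / f (b * x))
      ((deriv f (a * x) * a * f (b * x) - f (a * x) * (deriv f (b * x) * b)) /
        (f (b * x)) ^ 2) x := by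
    intro x hx
    have hax : a * x ∈ Ioi (0:ℝ) := mul_pos ha hx
    have hbx : b * x ∈ Ioi (0:ℝ) := mul_pos hb hx
    have h1 : HasDerivAt (fun y => f (a * y)) (deriv f (a * x) * a) x := by
      have := ((hdiff _ hax).hasDerivAt).comp x
        (((hasDerivAt_id x).const_mul a) : HasDerivAt (fun y => a * y) (a * 1) x)
      simpa [Function.comp_def] using this
    have h2 : HasDerivAt (fun y => f (b * y)) (deriv f (b * x) * b) x := by
      have := ((hdiff _ hbx).hasDerivAt).comp x
        (((hasDerivAt_id x).const_mul b) : HasDerivAt (fun y => b * y) (b * 1) x)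
      simpa [Function.comp_def] using this
    exact h1.div h2 (hpos _ hbx).ne'
  have hcont : ContinuousOn (fun x => f (a * x) / f (b * x)) (Ioi 0) :=
    fun x hx => ((key x hx).continuousAt).continuousWithinAt
  have := strictMonoOn_of_deriv_pos (convex_Ioi (0:ℝ)) hcont ?_
  · exact this
  · intro x hx
    rw [interior_Ioi] at hx
    rw [(key x hx).deriv]
    have hax : a * x ∈ Ioi (0:ℝ) := mul_pos ha hx
    have hbx : b * x ∈ Ioi (0:ℝ) := mul_pos hb hx
    have hu : 0 < f (a * x) := hpos _ hax
    have hv : 0 < f (b * x) := hpos _ hbx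
    have hlt : linFun f (a * x) < linFun f (b * x) :=
      hL hax hbx (by nlinarith [mem_Ioi.mp hx])
    have hlt' : (-(a * x) * deriv f (a * x)) * f (b * x) <
        (-(b * x) * deriv f (b * x)) * f (a * x) := by
      have := hlt
      simp only [linFun] at this
      exact (div_lt_div_iff₀ hu hv).mp this
    have hx0 : (0:ℝ) < x := mem_Ioi.mp hx
    apply div_pos
    · nlinarith
    · positivity
end

section
/- Let f₁ and f₂ be probability densities strictly positive on (0,∞), let 0 < a < v, let K = [v−a, v+a] × [v−a, v+a], let 0 < r < a/4, and let β satisfy 0 < β < min{ f₁(x) f₂(y) : (x,y) ∈ K }. Let φ be any measurable function on ℝ² with 0 ≤ φ(x,y) ≤ β for all (x,y) and φ(x,y) = 0 whenever (x − (v + a/2))² + (y − (v + a/2))² > r². Then the function f(x,y) := f₁(x) f₂(y) − φ(x,y) + φ(x, y+a) − φ(x+a, y+a) + φ(x+a, y) is nonnegative on ℝ², vanishes outside the first quadrant, integrates to 1 over ℝ², and its marginals are f₁ and f₂: ∫₀^∞ f(x,y) dy = f₁(x) for all x > 0 and ∫₀^∞ f(x,y) dx = f₂(y) for all y > 0. 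-/
open MeasureTheory Filter Set

/-- Bounded measurable functions supported in a finite-measure set are integrable. -/
lemma integrable_of_bounded_support' {α : Type*} [MeasurableSpace α] {μ : Measure α}
    {g : α → ℝ} (hm : Measurable g) {β : ℝ} (hb : ∀ y, 0 ≤ g y) (hb' : ∀ y, g y ≤ β)
    {s : Set α} (hμs : μ s ≠ ⊤) (hsupp : Function.support g ⊆ s) : Integrable g μ := by
  rw [← integrableOn_iff_integrable_of_support_subset hsupp]
  refine Measure.integrableOn_of_bounded (M := β) hμs hm.aestronglyMeasurable
    (ae_of_all _ fun y => ?_)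
  rw [Real.norm_eq_abs, abs_le]
  constructor <;> linarith [hb y, hb' y]

/-- Given probability densities `f₁`, `f₂` strictly positive on `(0,∞)`, `0 < a < v`,
`K = [v−a, v+a]²`, `0 < r < a/4`, `0 < β < min_K f₁(x)f₂(y)`, and any measurable `φ` with
`0 ≤ φ ≤ β` supported in the closed disc of radius `r` centered at `(v+a/2, v+a/2)`, the
function `f(x,y) = f₁(x)f₂(y) − φ(x,y) + φ(x,y+a) − φ(x+a,y+a) + φ(x+a,y)` is nonnegative,
vanishes outside the first quadrant, has total integral 1, and has marginals `f₁`, `f₂`. -/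
theorem perturbed_joint_density_properties
    (f₁ f₂ : ℝ → ℝ)
    (h₁0 : ∀ x, 0 ≤ f₁ x) (h₂0 : ∀ x, 0 ≤ f₂ x)
    (h₁v : ∀ x ≤ (0:ℝ), f₁ x = 0) (h₂v : ∀ x ≤ (0:ℝ), f₂ x = 0)
    (h₁m : Measurable f₁) (h₂m : Measurable f₂)
    (h₁i : ∫ x in Ioi (0:ℝ), f₁ x = 1) (h₂i : ∫ x in Ioi (0:ℝ), f₂ x = 1)
    (hp₁ : ∀ x ∈ Ioi (0:ℝ), 0 < f₁ x) (hp₂ : ∀ x ∈ Ioi (0:ℝ), 0 < f₂ x)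
    (a v : ℝ) (ha : 0 < a) (hav : a < v)
    (r : ℝ) (hr : 0 < r) (hra : r < a / 4)
    (β : ℝ) (hβ : 0 < β)
    (hβK : ∀ x ∈ Icc (v - a) (v + a), ∀ y ∈ Icc (v - a) (v + a), β < f₁ x * f₂ y)
    (φ : ℝ × ℝ → ℝ) (hφm : Measurable φ)
    (hφ0 : ∀ p, 0 ≤ φ p) (hφβ : ∀ p, φ p ≤ β)
    (hφsupp : ∀ p : ℝ × ℝ,
      r ^ 2 < (p.1 - (v + a / 2)) ^ 2 + (p.2 - (v + a / 2)) ^ 2 → φ p = 0) :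
    (∀ p : ℝ × ℝ, 0 ≤ f₁ p.1 * f₂ p.2 - φ p + φ (p.1, p.2 + a)
        - φ (p.1 + a, p.2 + a) + φ (p.1 + a, p.2)) ∧
    (∀ p : ℝ × ℝ, p.1 ≤ 0 ∨ p.2 ≤ 0 → f₁ p.1 * f₂ p.2 - φ p + φ (p.1, p.2 + a)
        - φ (p.1 + a, p.2 + a) + φ (p.1 + a, p.2) = 0) ∧
    (∫ p : ℝ × ℝ, (f₁ p.1 * f₂ p.2 - φ p + φ (p.1, p.2 + a)
        - φ (p.1 + a, p.2 + a) + φ (p.1 + a, p.2)) = 1) ∧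
    (∀ x ∈ Ioi (0:ℝ), ∫ y in Ioi (0:ℝ), (f₁ x * f₂ y - φ (x, y) + φ (x, y + a)
        - φ (x + a, y + a) + φ (x + a, y)) = f₁ x) ∧
    (∀ y ∈ Ioi (0:ℝ), ∫ x in Ioi (0:ℝ), (f₁ x * f₂ y - φ (x, y) + φ (x, y + a)
        - φ (x + a, y + a) + φ (x + a, y)) = f₂ y) := by
  set c : ℝ := v + a / 2 with hc
  -- support of φ is inside [c-r,c+r]²
  have hsupp : ∀ p : ℝ × ℝ, φ p ≠ 0 →
      c - r ≤ p.1 ∧ p.1 ≤ c + r ∧ c - r ≤ p.2 ∧ p.2 ≤ c + r := by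
    intro p hp
    have h : (p.1 - c) ^ 2 + (p.2 - c) ^ 2 ≤ r ^ 2 := by
      by_contra h
      exact hp (hφsupp p (lt_of_not_ge h))
    refine ⟨?_, ?_, ?_, ?_⟩ <;>
      nlinarith [sq_nonneg (p.1 - c), sq_nonneg (p.2 - c), sq_nonneg (p.1 - c + r),
        sq_nonneg (p.1 - c - r), sq_nonneg (p.2 - c + r), sq_nonneg (p.2 - c - r)]
  have hzero : ∀ p : ℝ × ℝ, (p.1 < c - r ∨ c + r < p.1 ∨ p.2 < c - r ∨ c + r < p.2) →
      φ p = 0 := by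
    intro p hp
    by_contra h
    obtain ⟨h1, h2, h3, h4⟩ := hsupp p h
    rcases hp with h' | h' | h' | h' <;> linarith
  -- basic numeric facts
  have hcr : (0:ℝ) < c - r := by simp only [hc]; linarith
  -- 1) nonnegativity
  have nonneg : ∀ p : ℝ × ℝ, 0 ≤ f₁ p.1 * f₂ p.2 - φ p + φ (p.1, p.2 + a)
      - φ (p.1 + a, p.2 + a) + φ (p.1 + a, p.2) := by
    intro p
    by_cases h1 : φ p = 0
    · by_cases h2 : φ (p.1 + a, p.2 + a) = 0
      · have := mul_nonneg (h₁0 p.1) (h₂0 p.2)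
        have := hφ0 (p.1, p.2 + a)
        have := hφ0 (p.1 + a, p.2)
        rw [h1, h2]; linarith
      · obtain ⟨k1, k2, k3, k4⟩ := hsupp _ h2
        simp only at k1 k2 k3 k4
        have hx : p.1 ∈ Icc (v - a) (v + a) := ⟨by simp only [hc] at k1 ⊢; linarith,
          by simp only [hc] at k2 ⊢; linarith⟩
        have hy : p.2 ∈ Icc (v - a) (v + a) := ⟨by simp only [hc] at k3 ⊢; linarith,
          by simp only [hc] at k4 ⊢; linarith⟩
        have hb := hβK p.1 hx p.2 hy
        have := hφβ (p.1 + a, p.2 + a)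
        have := hφ0 (p.1, p.2 + a)
        have := hφ0 (p.1 + a, p.2)
        rw [h1]; linarith
    · obtain ⟨k1, k2, k3, k4⟩ := hsupp _ h1
      have hx : p.1 ∈ Icc (v - a) (v + a) := ⟨by simp only [hc] at k1 ⊢; linarith,
        by simp only [hc] at k2 ⊢; linarith⟩
      have hy : p.2 ∈ Icc (v - a) (v + a) := ⟨by simp only [hc] at k3 ⊢; linarith,
        by simp only [hc] at k4 ⊢; linarith⟩
      have hb := hβK p.1 hx p.2 hy
      have h2 : φ (p.1 + a, p.2 + a) = 0 := hzero _ (Or.inr (Or.inl (by simp; linarith)))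
      have := hφβ p
      have := hφ0 (p.1, p.2 + a)
      have := hφ0 (p.1 + a, p.2)
      rw [h2]; linarith
  -- 2) vanishing outside first quadrant
  have vanish : ∀ p : ℝ × ℝ, p.1 ≤ 0 ∨ p.2 ≤ 0 → f₁ p.1 * f₂ p.2 - φ p + φ (p.1, p.2 + a)
      - φ (p.1 + a, p.2 + a) + φ (p.1 + a, p.2) = 0 := by
    intro p hp
    have hacr : a < c - r := by simp only [hc]; linarith
    rcases hp with h | h
    · have e1 : φ p = 0 := hzero _ (Or.inl (by linarith))
      have e2 : φ (p.1, p.2 + a) = 0 := hzero _ (Or.inl (by simpa using by linarith))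
      have e3 : φ (p.1 + a, p.2 + a) = 0 := hzero _ (Or.inl (by simpa using by linarith))
      have e4 : φ (p.1 + a, p.2) = 0 := hzero _ (Or.inl (by simpa using by linarith))
      rw [h₁v p.1 h, e1, e2, e3, e4]; ring
    · have e1 : φ p = 0 := hzero _ (Or.inr (Or.inr (Or.inl (by linarith))))
      have e2 : φ (p.1, p.2 + a) = 0 := hzero _ (Or.inr (Or.inr (Or.inl
        (by simpa using by linarith))))
      have e3 : φ (p.1 + a, p.2 + a) = 0 := hzero _ (Or.inr (Or.inr (Or.inl
        (by simpa using by linarith))))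
      have e4 : φ (p.1 + a, p.2) = 0 := hzero _ (Or.inr (Or.inr (Or.inl
        (by simpa using by linarith))))
      rw [h₂v p.2 h, e1, e2, e3, e4]; ring
  -- integrability of f₁, f₂ on ℝ and total integrals
  have hs₁ : Function.support f₁ ⊆ Ioi (0:ℝ) := fun x hx => lt_of_not_ge fun h => hx (h₁v x h)
  have hs₂ : Function.support f₂ ⊆ Ioi (0:ℝ) := fun x hx => lt_of_not_ge fun h => hx (h₂v x h)
  have hint₁ : Integrable f₁ := by
    rw [← integrableOn_iff_integrable_of_support_subset hs₁]
    by_contra h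
    rw [integral_undef h] at h₁i; norm_num at h₁i
  have hint₂ : Integrable f₂ := by
    rw [← integrableOn_iff_integrable_of_support_subset hs₂]
    by_contra h
    rw [integral_undef h] at h₂i; norm_num at h₂i
  have hI₁ : ∫ x, f₁ x = 1 := by
    rw [← h₁i]
    exact (setIntegral_eq_integral_of_forall_compl_eq_zero fun x hx =>
      h₁v x (not_lt.mp hx)).symm
  have hI₂ : ∫ x, f₂ x = 1 := by
    rw [← h₂i]
    exact (setIntegral_eq_integral_of_forall_compl_eq_zero fun x hx =>
      h₂v x (not_lt.mp hx)).symm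
  have hacr : a < c - r := by simp only [hc]; linarith
  refine ⟨nonneg, vanish, ?_, ?_, ?_⟩
  · -- total integral is 1
    have hrect : volume (Icc (c - r) (c + r) ×ˢ Icc (c - r) (c + r)) ≠ ⊤ :=
      ((isCompact_Icc.prod isCompact_Icc).measure_lt_top).ne
    have hφint : Integrable φ := by
      refine integrable_of_bounded_support' hφm hφ0 hφβ hrect fun p hp => ?_
      obtain ⟨k1, k2, k3, k4⟩ := hsupp p hp
      exact ⟨⟨k1, k2⟩, ⟨k3, k4⟩⟩
    have hφint' : ∀ b d : ℝ, Integrable (fun p : ℝ × ℝ => φ (p.1 + b, p.2 + d)) := by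
      intro b d
      have h := (measurePreserving_add_right (volume : Measure (ℝ × ℝ)) (b, d)).integrable_comp_emb
        (g := φ) (measurableEmbedding_addRight (b, d))
      simpa [Function.comp_def, ← Prod.mk_add_mk] using h.mpr hφint
    have hφI : ∀ b d : ℝ, ∫ p : ℝ × ℝ, φ (p.1 + b, p.2 + d) = ∫ p : ℝ × ℝ, φ p := by
      intro b d
      have := integral_add_right_eq_self (μ := (volume : Measure (ℝ × ℝ))) φ (b, d)
      simpa [Prod.ext_iff, ← Prod.mk_add_mk] using this
    have i1 : Integrable (fun p : ℝ × ℝ => φ (p.1, p.2 + a)) := by simpa using hφint' 0 a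
    have i2 : Integrable (fun p : ℝ × ℝ => φ (p.1 + a, p.2 + a)) := hφint' a a
    have i3 : Integrable (fun p : ℝ × ℝ => φ (p.1 + a, p.2)) := by simpa using hφint' a 0
    have I1 : ∫ p : ℝ × ℝ, φ (p.1, p.2 + a) = ∫ p : ℝ × ℝ, φ p := by simpa using hφI 0 a
    have I2 : ∫ p : ℝ × ℝ, φ (p.1 + a, p.2 + a) = ∫ p : ℝ × ℝ, φ p := hφI a a
    have I3 : ∫ p : ℝ × ℝ, φ (p.1 + a, p.2) = ∫ p : ℝ × ℝ, φ p := by simpa using hφI a 0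
    have hmul : Integrable (fun p : ℝ × ℝ => f₁ p.1 * f₂ p.2) := by
      rw [Measure.volume_eq_prod]
      exact hint₁.mul_prod hint₂
    have e0 : ∫ p : ℝ × ℝ, f₁ p.1 * f₂ p.2 = 1 := by
      rw [Measure.volume_eq_prod, integral_prod_mul, hI₁, hI₂]; norm_num
    have s1 : ∫ p : ℝ × ℝ, (f₁ p.1 * f₂ p.2 - φ p + φ (p.1, p.2 + a)
        - φ (p.1 + a, p.2 + a) + φ (p.1 + a, p.2))
        = (∫ p : ℝ × ℝ, (f₁ p.1 * f₂ p.2 - φ p + φ (p.1, p.2 + a) - φ (p.1 + a, p.2 + a)))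
          + ∫ p : ℝ × ℝ, φ (p.1 + a, p.2) :=
      integral_add (((hmul.sub hφint).add i1).sub i2) i3
    have s2 : ∫ p : ℝ × ℝ, (f₁ p.1 * f₂ p.2 - φ p + φ (p.1, p.2 + a) - φ (p.1 + a, p.2 + a))
        = (∫ p : ℝ × ℝ, (f₁ p.1 * f₂ p.2 - φ p + φ (p.1, p.2 + a)))
          - ∫ p : ℝ × ℝ, φ (p.1 + a, p.2 + a) :=
      integral_sub ((hmul.sub hφint).add i1) i2
    have s3 : ∫ p : ℝ × ℝ, (f₁ p.1 * f₂ p.2 - φ p + φ (p.1, p.2 + a))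
        = (∫ p : ℝ × ℝ, (f₁ p.1 * f₂ p.2 - φ p)) + ∫ p : ℝ × ℝ, φ (p.1, p.2 + a) :=
      integral_add (hmul.sub hφint) i1
    have s4 : ∫ p : ℝ × ℝ, (f₁ p.1 * f₂ p.2 - φ p)
        = (∫ p : ℝ × ℝ, f₁ p.1 * f₂ p.2) - ∫ p : ℝ × ℝ, φ p :=
      integral_sub hmul hφint
    rw [s1, s2, s3, s4, e0, I1, I2, I3]
    ring
  · -- marginal in y for fixed x
    intro x hx
    have hIcc : volume (Icc (c - r) (c + r)) ≠ ⊤ := (isCompact_Icc.measure_lt_top).ne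
    have hm1 : Measurable fun y => φ (x, y) :=
      hφm.comp (measurable_const.prodMk measurable_id)
    have hm2 : Measurable fun y => φ (x + a, y) :=
      hφm.comp (measurable_const.prodMk measurable_id)
    have j1 : Integrable (fun y => φ (x, y)) :=
      integrable_of_bounded_support' hm1 (fun y => hφ0 _) (fun y => hφβ _) hIcc
        (fun y hy => ⟨(hsupp _ hy).2.2.1, (hsupp _ hy).2.2.2⟩)
    have j2 : Integrable (fun y => φ (x + a, y)) :=
      integrable_of_bounded_support' hm2 (fun y => hφ0 _) (fun y => hφβ _) hIcc
        (fun y hy => ⟨(hsupp _ hy).2.2.1, (hsupp _ hy).2.2.2⟩)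
    have j1' : Integrable (fun y => φ (x, y + a)) := by
      have h := (measurePreserving_add_right (volume : Measure ℝ) a).integrable_comp_emb
        (g := fun y => φ (x, y)) (measurableEmbedding_addRight a)
      simpa [Function.comp_def] using h.mpr j1
    have j2' : Integrable (fun y => φ (x + a, y + a)) := by
      have h := (measurePreserving_add_right (volume : Measure ℝ) a).integrable_comp_emb
        (g := fun y => φ (x + a, y)) (measurableEmbedding_addRight a)
      simpa [Function.comp_def] using h.mpr j2
    have k1 : ∫ y, φ (x, y + a) = ∫ y, φ (x, y) := by
      simpa using integral_add_right_eq_self (fun y => φ (x, y)) a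
    have k2 : ∫ y, φ (x + a, y + a) = ∫ y, φ (x + a, y) := by
      simpa using integral_add_right_eq_self (fun y => φ (x + a, y)) a
    have hvan : ∀ y, y ∉ Ioi (0:ℝ) →
        f₁ x * f₂ y - φ (x, y) + φ (x, y + a) - φ (x + a, y + a) + φ (x + a, y) = 0 := by
      intro y hy
      have hy' : y ≤ 0 := not_lt.mp hy
      have e1 : φ (x, y) = 0 := hzero _ (Or.inr (Or.inr (Or.inl (by simpa using by linarith))))
      have e2 : φ (x, y + a) = 0 :=
        hzero _ (Or.inr (Or.inr (Or.inl (by simpa using by linarith))))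
      have e3 : φ (x + a, y + a) = 0 :=
        hzero _ (Or.inr (Or.inr (Or.inl (by simpa using by linarith))))
      have e4 : φ (x + a, y) = 0 :=
        hzero _ (Or.inr (Or.inr (Or.inl (by simpa using by linarith))))
      rw [h₂v y hy', e1, e2, e3, e4]; ring
    rw [setIntegral_eq_integral_of_forall_compl_eq_zero hvan]
    have hintf₂ : Integrable (fun y => f₁ x * f₂ y) := hint₂.const_mul _
    have s1 : ∫ y : ℝ, (f₁ x * f₂ y - φ (x, y) + φ (x, y + a)
        - φ (x + a, y + a) + φ (x + a, y))
        = (∫ y : ℝ, (f₁ x * f₂ y - φ (x, y) + φ (x, y + a) - φ (x + a, y + a)))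
          + ∫ y : ℝ, φ (x + a, y) :=
      integral_add (((hintf₂.sub j1).add j1').sub j2') j2
    have s2 : ∫ y : ℝ, (f₁ x * f₂ y - φ (x, y) + φ (x, y + a) - φ (x + a, y + a))
        = (∫ y : ℝ, (f₁ x * f₂ y - φ (x, y) + φ (x, y + a)))
          - ∫ y : ℝ, φ (x + a, y + a) :=
      integral_sub ((hintf₂.sub j1).add j1') j2'
    have s3 : ∫ y : ℝ, (f₁ x * f₂ y - φ (x, y) + φ (x, y + a))
        = (∫ y : ℝ, (f₁ x * f₂ y - φ (x, y))) + ∫ y : ℝ, φ (x, y + a) :=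
      integral_add (hintf₂.sub j1) j1'
    have s4 : ∫ y : ℝ, (f₁ x * f₂ y - φ (x, y))
        = (∫ y : ℝ, f₁ x * f₂ y) - ∫ y : ℝ, φ (x, y) :=
      integral_sub hintf₂ j1
    have s5 : ∫ y : ℝ, f₁ x * f₂ y = f₁ x := by
      rw [integral_const_mul, hI₂, mul_one]
    rw [s1, s2, s3, s4, s5, k1, k2]
    ring
  · -- marginal in x for fixed y
    intro y hy
    have hIcc : volume (Icc (c - r) (c + r)) ≠ ⊤ := (isCompact_Icc.measure_lt_top).ne
    have hm1 : Measurable fun x => φ (x, y) :=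
      hφm.comp (measurable_id.prodMk measurable_const)
    have hm2 : Measurable fun x => φ (x, y + a) :=
      hφm.comp (measurable_id.prodMk measurable_const)
    have j1 : Integrable (fun x => φ (x, y)) :=
      integrable_of_bounded_support' hm1 (fun x => hφ0 _) (fun x => hφβ _) hIcc
        (fun x hx => ⟨(hsupp _ hx).1, (hsupp _ hx).2.1⟩)
    have j2 : Integrable (fun x => φ (x, y + a)) :=
      integrable_of_bounded_support' hm2 (fun x => hφ0 _) (fun x => hφβ _) hIcc
        (fun x hx => ⟨(hsupp _ hx).1, (hsupp _ hx).2.1⟩)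
    have j1' : Integrable (fun x => φ (x + a, y)) := by
      have h := (measurePreserving_add_right (volume : Measure ℝ) a).integrable_comp_emb
        (g := fun x => φ (x, y)) (measurableEmbedding_addRight a)
      simpa [Function.comp_def] using h.mpr j1
    have j2' : Integrable (fun x => φ (x + a, y + a)) := by
      have h := (measurePreserving_add_right (volume : Measure ℝ) a).integrable_comp_emb
        (g := fun x => φ (x, y + a)) (measurableEmbedding_addRight a)
      simpa [Function.comp_def] using h.mpr j2
    have k1 : ∫ x, φ (x + a, y) = ∫ x, φ (x, y) := by
      simpa using integral_add_right_eq_self (fun x => φ (x, y)) a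
    have k2 : ∫ x, φ (x + a, y + a) = ∫ x, φ (x, y + a) := by
      simpa using integral_add_right_eq_self (fun x => φ (x, y + a)) a
    have hvan : ∀ x, x ∉ Ioi (0:ℝ) →
        f₁ x * f₂ y - φ (x, y) + φ (x, y + a) - φ (x + a, y + a) + φ (x + a, y) = 0 := by
      intro x hx
      have hx' : x ≤ 0 := not_lt.mp hx
      have e1 : φ (x, y) = 0 := hzero _ (Or.inl (by simpa using by linarith))
      have e2 : φ (x, y + a) = 0 := hzero _ (Or.inl (by simpa using by linarith))
      have e3 : φ (x + a, y + a) = 0 := hzero _ (Or.inl (by simpa using by linarith))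
      have e4 : φ (x + a, y) = 0 := hzero _ (Or.inl (by simpa using by linarith))
      rw [h₁v x hx', e1, e2, e3, e4]; ring
    rw [setIntegral_eq_integral_of_forall_compl_eq_zero hvan]
    have hintf₁ : Integrable (fun x => f₁ x * f₂ y) := hint₁.mul_const _
    have s1 : ∫ x : ℝ, (f₁ x * f₂ y - φ (x, y) + φ (x, y + a)
        - φ (x + a, y + a) + φ (x + a, y))
        = (∫ x : ℝ, (f₁ x * f₂ y - φ (x, y) + φ (x, y + a) - φ (x + a, y + a)))
          + ∫ x : ℝ, φ (x + a, y) :=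
      integral_add (((hintf₁.sub j1).add j2).sub j2') j1'
    have s2 : ∫ x : ℝ, (f₁ x * f₂ y - φ (x, y) + φ (x, y + a) - φ (x + a, y + a))
        = (∫ x : ℝ, (f₁ x * f₂ y - φ (x, y) + φ (x, y + a)))
          - ∫ x : ℝ, φ (x + a, y + a) :=
      integral_sub ((hintf₁.sub j1).add j2) j2'
    have s3 : ∫ x : ℝ, (f₁ x * f₂ y - φ (x, y) + φ (x, y + a))
        = (∫ x : ℝ, (f₁ x * f₂ y - φ (x, y))) + ∫ x : ℝ, φ (x, y + a) :=
      integral_add (hintf₁.sub j1) j2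
    have s4 : ∫ x : ℝ, (f₁ x * f₂ y - φ (x, y))
        = (∫ x : ℝ, f₁ x * f₂ y) - ∫ x : ℝ, φ (x, y) :=
      integral_sub hintf₁ j1
    have s5 : ∫ x : ℝ, f₁ x * f₂ y = f₂ y := by
      rw [integral_mul_const, hI₁, one_mul]
    rw [s1, s2, s3, s4, s5, k1, k2]
    ring
end
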